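/- Let $F$ be a compact connected subset of $\mathbb{R}^2$ with empty interior such that $F$ is not contained in any affine line, and suppose that $F^c = \mathbb{R}^2 \setminus F$ has no bounded connected components (i.e., $F^c$ is connected). Then the boundary of the convex hull of $F$ is not contained in $F$: $\partial(\mathrm{conv}(F)) \not\subset F$. -/

import Mathlib

/-- Let `F` be a compact connected subset of `ℝ²` with empty interior, not contained in
any affine line, and suppose `Fᶜ` has no bounded connected components. Then the boundary
of the convex hull of `F` is not contained in `F`. -/
theorem frontier_convexHull_not_subset
    (F : Set (EuclideanSpace ℝ (Fin 2)))
    (hFcpt : IsCompact F) (hFconn : IsConnected F) (hFint : interior F = ∅)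
    (hFline : ¬ ∃ (φ : EuclideanSpace ℝ (Fin 2) →ₗ[ℝ] ℝ) (c : ℝ),
      φ ≠ 0 ∧ ∀ x ∈ F, φ x = c)
    (hnb : ∀ x ∈ Fᶜ, ¬ Bornology.IsBounded (connectedComponentIn Fᶜ x)) :
    ¬ frontier (convexHull ℝ F) ⊆ F := by
  intro hsub
  set A := convexHull ℝ F with hA
  -- F spans the whole space affinely
  have hFne : F.Nonempty := hFconn.nonempty
  have hspan : affineSpan ℝ F = ⊤ := by
    by_contra hspan
    rw [AffineSubspace.affineSpan_eq_top_iff_vectorSpan_eq_top_of_nonempty ℝ _ _ hFne] at hspan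
    have hbot : (vectorSpan ℝ F)ᗮ ≠ ⊥ := fun h =>
      hspan (Submodule.orthogonal_eq_bot_iff.mp h)
    obtain ⟨v, hv, hv0⟩ := Submodule.exists_mem_ne_zero_of_ne_bot hbot
    obtain ⟨p, hp⟩ := hFne
    refine hFline ⟨(innerSL ℝ v).toLinearMap, inner ℝ v p, ?_, ?_⟩
    · intro h
      have := LinearMap.congr_fun h v
      simp only [ContinuousLinearMap.coe_coe, innerSL_apply_apply, LinearMap.zero_apply] at this
      exact hv0 (inner_self_eq_zero.mp this)
    · intro x hx
      have hmem : x -ᵥ p ∈ vectorSpan ℝ F := vsub_mem_vectorSpan ℝ hx hp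
      have h0 : (inner ℝ (x - p) v : ℝ) = 0 :=
        (Submodule.mem_orthogonal _ v).mp hv _ hmem
      have : (inner ℝ v (x - p) : ℝ) = 0 := by
        rwa [real_inner_comm]
      simp only [inner_sub_right] at this
      simpa [sub_eq_zero] using this
  -- interior of A is nonempty
  have hconv : Convex ℝ A := convex_convexHull ℝ F
  have hintA : (interior A).Nonempty := by
    rw [hconv.interior_nonempty_iff_affineSpan_eq_top, affineSpan_convexHull]
    exact hspan
  -- pick x in interior A but not in F
  have hnotsub : ¬ interior A ⊆ F := by
    intro h
    have : interior A ⊆ interior F := interior_maximal h isOpen_interior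
    rw [hFint] at this
    exact hintA.ne_empty (Set.subset_empty_iff.mp this)
  obtain ⟨x, hxA, hxF⟩ := Set.not_subset.mp hnotsub
  -- its connected component in Fᶜ is bounded
  have hxFc : x ∈ Fᶜ := hxF
  apply hnb x hxFc
  have hC : connectedComponentIn Fᶜ x ⊆ interior A := by
    have hCconn : IsPreconnected (connectedComponentIn Fᶜ x) :=
      (isPreconnected_connectedComponentIn)
    have hCsub : connectedComponentIn Fᶜ x ⊆ interior A ∪ (closure A)ᶜ := by
      intro y hy
      have hyF : y ∈ Fᶜ := connectedComponentIn_subset _ _ hy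
      have hyfr : y ∉ frontier A := fun h => hyF (hsub h)
      rcases em (y ∈ closure A) with h | h
      · left
        rw [← closure_diff_frontier]
        exact ⟨h, hyfr⟩
      · right; exact h
    refine hCconn.subset_left_of_subset_union isOpen_interior
      isClosed_closure.isOpen_compl ?_ hCsub ?_
    · exact disjoint_compl_right.mono_left (interior_subset.trans subset_closure)
    · exact ⟨x, mem_connectedComponentIn hxFc, hxA⟩
  exact (Bornology.IsBounded.subset (((isBounded_convexHull).mpr hFcpt.isBounded).subset
    interior_subset) hC)
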